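/- Let τ : U ⊕ K → U ⊕ L be an isometry with blocks [[A,B],[C,D]]. Then (I - A) is range-Hermitian, i.e., the range of (I - A) equals the range of (I - A)†. -/

import Mathlib

open Matrix

set_option maxHeartbeats 1000000

section Aux

variable {E : Type*} [NormedAddCommGroup E] [InnerProductSpace ℂ E] [FiniteDimensional ℂ E]

lemma aux_range (S : E →ₗ[ℂ] E)
    (h : LinearMap.ker (LinearMap.adjoint S) = LinearMap.ker S) :
    LinearMap.range S = (LinearMap.ker S)ᗮ := by
  apply Submodule.eq_of_le_of_finrank_le
  · rintro _ ⟨x, rfl⟩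
    rw [Submodule.mem_orthogonal]
    intro y hy
    rw [← h, LinearMap.mem_ker] at hy
    rw [← LinearMap.adjoint_inner_left, hy, inner_zero_left]
  · have h1 := Submodule.finrank_add_finrank_orthogonal (LinearMap.ker S)
    have h2 := LinearMap.finrank_range_add_finrank_ker S
    omega

lemma aux_range_eq (S : E →ₗ[ℂ] E)
    (h : LinearMap.ker (LinearMap.adjoint S) = LinearMap.ker S) :
    LinearMap.range S = LinearMap.range (LinearMap.adjoint S) := by
  have h' : LinearMap.ker (LinearMap.adjoint (LinearMap.adjoint S)) =
      LinearMap.ker (LinearMap.adjoint S) := by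
    rw [LinearMap.adjoint_adjoint, h]
  rw [aux_range S h, aux_range (LinearMap.adjoint S) h', h]

end Aux

/-- If τ = [[A,B],[C,D]] is an isometry, then I - A is range-Hermitian. -/
theorem stmt2 {u k l : ℕ}
    (A : Matrix (Fin u) (Fin u) ℂ) (B : Matrix (Fin u) (Fin k) ℂ)
    (C : Matrix (Fin l) (Fin u) ℂ) (D : Matrix (Fin l) (Fin k) ℂ)
    (hiso : (fromBlocks A B C D)ᴴ * fromBlocks A B C D = 1) :
    LinearMap.range (1 - A).mulVecLin = LinearMap.range ((1 - A)ᴴ).mulVecLin := by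
  -- Extract the (1,1) block of the isometry equation: Aᴴ A + Cᴴ C = 1
  have h1 : Aᴴ * A + Cᴴ * C = 1 := by
    have h := congrArg Matrix.toBlocks₁₁ hiso
    rw [fromBlocks_conjTranspose, fromBlocks_multiply, ← fromBlocks_one,
      toBlocks_fromBlocks₁₁, toBlocks_fromBlocks₁₁] at h
    exact h
  classical
  have hmul : ∀ {a b c : ℕ} (M : Matrix (Fin a) (Fin b) ℂ) (N : Matrix (Fin b) (Fin c) ℂ)
      (x : EuclideanSpace ℂ (Fin c)),
      Matrix.toEuclideanLin (M * N) x = Matrix.toEuclideanLin M (Matrix.toEuclideanLin N x) := by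
    intro a b c M N x
    simp [Matrix.toEuclideanLin_apply, Matrix.mulVec_mulVec]
  have hone : ∀ x : EuclideanSpace ℂ (Fin u),
      Matrix.toEuclideanLin (1 : Matrix (Fin u) (Fin u) ℂ) x = x := by
    intro x
    simp [Matrix.toEuclideanLin_apply]
  set TA := Matrix.toEuclideanLin A with hTA
  set TC := Matrix.toEuclideanLin C with hTC
  -- key pointwise identity
  have key : ∀ x : EuclideanSpace ℂ (Fin u),
      LinearMap.adjoint TA (TA x) + LinearMap.adjoint TC (TC x) = x := by
    intro x
    have h' := congrArg (fun M => Matrix.toEuclideanLin M x) h1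
    simp only [map_add, LinearMap.add_apply] at h'
    rw [hmul, hmul, hone, Matrix.toEuclideanLin_conjTranspose_eq_adjoint,
      Matrix.toEuclideanLin_conjTranspose_eq_adjoint] at h'
    exact h' 
  have keyInner : ∀ x : EuclideanSpace ℂ (Fin u),
      (inner ℂ (TA x) (TA x) : ℂ) + inner ℂ (TC x) (TC x) = inner ℂ x x := by
    intro x
    calc (inner ℂ (TA x) (TA x) : ℂ) + inner ℂ (TC x) (TC x)
        = inner ℂ x (LinearMap.adjoint TA (TA x)) + inner ℂ x (LinearMap.adjoint TC (TC x)) := by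
          rw [LinearMap.adjoint_inner_right, LinearMap.adjoint_inner_right]
      _ = inner ℂ x (LinearMap.adjoint TA (TA x) + LinearMap.adjoint TC (TC x)) := by
          rw [inner_add_right]
      _ = inner ℂ x x := by rw [key x]
  -- kernel equality : Ax = x ↔ Aᴴ x = x
  have hker : LinearMap.ker (LinearMap.adjoint (Matrix.toEuclideanLin (1 - A))) =
      LinearMap.ker (Matrix.toEuclideanLin (1 - A)) := by
    have hsub : ∀ x : EuclideanSpace ℂ (Fin u),
        Matrix.toEuclideanLin (1 - A) x = x - TA x := by
      intro x
      rw [map_sub, LinearMap.sub_apply, hone]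
    have hsub' : ∀ x : EuclideanSpace ℂ (Fin u),
        LinearMap.adjoint (Matrix.toEuclideanLin (1 - A)) x = x - LinearMap.adjoint TA x := by
      intro x
      have hid : Matrix.toEuclideanLin (1 : Matrix (Fin u) (Fin u) ℂ) =
          (1 : EuclideanSpace ℂ (Fin u) →ₗ[ℂ] EuclideanSpace ℂ (Fin u)) :=
        LinearMap.ext hone
      have hadj1 : LinearMap.adjoint
          (1 : EuclideanSpace ℂ (Fin u) →ₗ[ℂ] EuclideanSpace ℂ (Fin u)) = 1 := by
        rw [← LinearMap.star_eq_adjoint, star_one]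
      rw [← Matrix.toEuclideanLin_conjTranspose_eq_adjoint, conjTranspose_sub, map_sub,
        LinearMap.sub_apply, Matrix.toEuclideanLin_conjTranspose_eq_adjoint,
        Matrix.toEuclideanLin_conjTranspose_eq_adjoint, hid, hadj1, ← hTA]
      simp
    ext x
    rw [LinearMap.mem_ker, LinearMap.mem_ker, hsub, hsub', sub_eq_zero, sub_eq_zero]
    constructor
    · -- Aᴴ x = x → A x = x
      intro hx
      have hx' : (x : EuclideanSpace ℂ (Fin u)) = LinearMap.adjoint TA x := hx
      have e1 : (inner ℂ (TA x - x) (TA x - x) : ℂ)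
          = inner ℂ (TA x) (TA x) - inner ℂ x x := by
        rw [inner_sub_sub_self]
        have h2 : (inner ℂ (TA x) x : ℂ) = inner ℂ x x := by
          rw [← LinearMap.adjoint_inner_right, ← hx']
        have h3 : (inner ℂ x (TA x) : ℂ) = inner ℂ x x := by
          rw [← LinearMap.adjoint_inner_left, ← hx']
        rw [h2, h3]; ring
      have e2 : (inner ℂ (TA x - x) (TA x - x) : ℂ) = - inner ℂ (TC x) (TC x) := by
        rw [e1]
        have := keyInner x
        linear_combination this
      have e3 : (‖TA x - x‖ : ℝ)^2 = -(‖TC x‖^2) := by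
        have h := e2
        rw [inner_self_eq_norm_sq_to_K, inner_self_eq_norm_sq_to_K] at h
        exact_mod_cast h
      have h4 : ‖TA x - x‖ = 0 := by nlinarith [sq_nonneg ‖TA x - x‖, sq_nonneg ‖TC x‖]
      have h5 : TA x - x = 0 := by rwa [norm_eq_zero] at h4
      exact (sub_eq_zero.mp h5).symm
    · -- A x = x → Aᴴ x = x
      intro hx
      have hx' : TA x = x := hx.symm
      have hC : (inner ℂ (TC x) (TC x) : ℂ) = 0 := by
        have := keyInner x
        rw [hx'] at this
        linear_combination this
      have hC0 : TC x = 0 := by rwa [inner_self_eq_zero] at hC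
      have := key x
      rw [hx', hC0, map_zero, add_zero] at this
      exact this.symm
  -- range equality at the Euclidean level
  have hrange : LinearMap.range (Matrix.toEuclideanLin (1 - A)) =
      LinearMap.range (Matrix.toEuclideanLin ((1 - A)ᴴ)) := by
    rw [Matrix.toEuclideanLin_conjTranspose_eq_adjoint]
    exact aux_range_eq _ hker
  -- transfer back to mulVecLin
  have htrans : ∀ M : Matrix (Fin u) (Fin u) ℂ,
      LinearMap.range M.mulVecLin =
        Submodule.map (WithLp.linearEquiv 2 ℂ (Fin u → ℂ) : _ →ₗ[ℂ] (Fin u → ℂ))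
          (LinearMap.range (Matrix.toEuclideanLin M)) := by
    intro M
    ext y
    simp only [LinearMap.mem_range, Submodule.mem_map]
    constructor
    · rintro ⟨x, rfl⟩
      exact ⟨Matrix.toEuclideanLin M ((WithLp.equiv 2 (Fin u → ℂ)).symm x), ⟨_, rfl⟩, rfl⟩
    · rintro ⟨z, ⟨w, rfl⟩, rfl⟩
      exact ⟨WithLp.equiv 2 (Fin u → ℂ) w, rfl⟩
  rw [htrans, htrans, hrange]
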